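/- Let (Ω, ℱ, P) be a probability space and (ℱ_t)_{t≥1} a filtration. Let (Y_t)_{t≥1} and (Z_t)_{t≥1} be sequences of nonnegative, integrable, adapted real random variables such that E[Y_{t+1} ∣ ℱ_t] ≤ Y_t + Z_t almost surely for every t, and Σ_{t=1}^∞ E[Z_t] < ∞. Then there exists a nonnegative random variable Y such that Y_t converges to Y almost surely. -/

import Mathlib

open MeasureTheory Filter

/-- The extension of the supermartingale convergence theorem stated in the paper
(a Robbins–Siegmund-type result): if `Y` and `Z` are nonnegative, integrable,
adapted sequences with `E[Y (t+1) ∣ ℱ t] ≤ Y t + Z t` a.s. for every `t` and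
`∑ t, E[Z t] < ∞`, then `Y t` converges almost surely to a nonnegative random
variable. -/
theorem almost_supermartingale_convergence
    {Ω : Type*} {mΩ : MeasurableSpace Ω} (μ : Measure Ω) [IsProbabilityMeasure μ]
    (ℱ : Filtration ℕ mΩ)
    (Y Z : ℕ → Ω → ℝ)
    (hY_adapted : Adapted ℱ Y) (hZ_adapted : Adapted ℱ Z)
    (hY_nonneg : ∀ t ω, 0 ≤ Y t ω) (hZ_nonneg : ∀ t ω, 0 ≤ Z t ω)
    (hY_int : ∀ t, Integrable (Y t) μ) (hZ_int : ∀ t, Integrable (Z t) μ)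
    (hcond : ∀ t, ∀ᵐ ω ∂μ, (μ[Y (t + 1)|ℱ t]) ω ≤ Y t ω + Z t ω)
    (hsum : Summable fun t => ∫ ω, Z t ω ∂μ) :
    ∃ Ylim : Ω → ℝ, Measurable Ylim ∧ (∀ ω, 0 ≤ Ylim ω) ∧
      ∀ᵐ ω ∂μ, Tendsto (fun t => Y t ω) atTop (nhds (Ylim ω)) := by
  classical
  set S : ℕ → Ω → ℝ := fun t ω => ∑ s ∈ Finset.range t, Z s ω with hSdef
  set M : ℕ → Ω → ℝ := fun t ω => Y t ω - S t ω with hMdef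
  have hS_sm : ∀ t, StronglyMeasurable[ℱ t] (S t) := by
    intro t
    apply Finset.stronglyMeasurable_fun_sum
    intro s hs
    exact (hZ_adapted s).stronglyMeasurable.mono (ℱ.mono (Finset.mem_range.1 hs).le)
  have hS_int : ∀ t, Integrable (S t) μ := fun t =>
    integrable_finset_sum _ fun s _ => hZ_int s
  have hM_adapted : Adapted ℱ M := fun t => (hY_adapted t).sub (hS_sm t).measurable
  have hM_int : ∀ t, Integrable (M t) μ := fun t => (hY_int t).sub (hS_int t)
  -- the supermartingale step
  have hstep : ∀ t, μ[M (t + 1)|ℱ t] ≤ᵐ[μ] M t := by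
    intro t
    have h1 : μ[M (t + 1)|ℱ t] =ᵐ[μ]
        fun ω => (μ[Y (t + 1)|ℱ t]) ω - (μ[S (t + 1)|ℱ t]) ω :=
      condExp_sub (hY_int (t + 1)) (hS_int (t + 1)) _
    have hS1_sm : StronglyMeasurable[ℱ t] (S (t + 1)) := by
      apply Finset.stronglyMeasurable_fun_sum
      intro s hs
      exact (hZ_adapted s).stronglyMeasurable.mono (ℱ.mono (Nat.lt_succ_iff.1 (Finset.mem_range.1 hs)))
    have h2 : μ[S (t + 1)|ℱ t] = S (t + 1) :=
      condExp_of_stronglyMeasurable (ℱ.le t) hS1_sm (hS_int (t + 1))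
    filter_upwards [h1, hcond t] with ω h1ω h2ω
    rw [h1ω, h2]
    have hSsucc : S (t + 1) ω = S t ω + Z t ω := Finset.sum_range_succ _ _
    simp only [hMdef, hSsucc]
    linarith
  have hsuper : Supermartingale M ℱ μ := supermartingale_nat hM_adapted.stronglyAdapted hM_int hstep
  -- bound on sums of integrals of Z
  have hZint_nonneg : ∀ s, 0 ≤ ∫ ω, Z s ω ∂μ := fun s =>
    integral_nonneg (hZ_nonneg s)
  set C : ℝ := ∑' s, ∫ ω, Z s ω ∂μ with hCdef
  have hSC : ∀ t, ∫ ω, S t ω ∂μ ≤ C := by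
    intro t
    rw [integral_finset_sum _ fun s _ => hZ_int s]
    exact hsum.sum_le_tsum _ (fun s _ => hZint_nonneg s)
  have hS_nonneg : ∀ t ω, 0 ≤ S t ω := fun t ω =>
    Finset.sum_nonneg fun s _ => hZ_nonneg s ω
  -- E[M n] ≤ E[Y 0]
  have hEM : ∀ n, ∫ ω, M n ω ∂μ ≤ ∫ ω, Y 0 ω ∂μ := by
    intro n
    have := hsuper.setIntegral_le (Nat.zero_le n) MeasurableSet.univ
    simpa [setIntegral_univ, hMdef, hSdef] using this
  -- L¹ bound
  have hEY : ∀ n, ∫ ω, Y n ω ∂μ ≤ ∫ ω, Y 0 ω ∂μ + C := by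
    intro n
    have h := hEM n
    have : ∫ ω, M n ω ∂μ = ∫ ω, Y n ω ∂μ - ∫ ω, S n ω ∂μ :=
      integral_sub (hY_int n) (hS_int n)
    have := hSC n
    linarith
  set B : ℝ := ∫ ω, Y 0 ω ∂μ + 2 * C with hBdef
  have hbdd : ∀ n, eLpNorm (M n) 1 μ ≤ ENNReal.ofReal B := by
    intro n
    rw [eLpNorm_one_eq_lintegral_enorm, ← ofReal_integral_norm_eq_lintegral_enorm (hM_int n)]
    apply ENNReal.ofReal_le_ofReal
    have h1 : ∫ ω, ‖M n ω‖ ∂μ ≤ ∫ ω, (Y n ω + S n ω) ∂μ := by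
      apply integral_mono ((hM_int n).norm) ((hY_int n).add (hS_int n))
      intro ω
      simp only [hMdef, Real.norm_eq_abs, Pi.add_apply]
      rw [abs_sub_le_iff]
      constructor <;> linarith [hY_nonneg n ω, hS_nonneg n ω]
    rw [integral_add (hY_int n) (hS_int n)] at h1
    have := hEY n
    have := hSC n
    simp only [hBdef]
    linarith
  -- a.e. convergence of M
  have hbdd' : ∀ n, eLpNorm ((-M) n) 1 μ ≤ ((ENNReal.ofReal B).toNNReal : ENNReal) := by
    intro n
    rw [ENNReal.coe_toNNReal ENNReal.ofReal_ne_top]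
    have hneg : (-M) n = -(M n) := rfl
    rw [hneg, eLpNorm_neg]
    exact hbdd n
  have hMconv := hsuper.neg.ae_tendsto_limitProcess hbdd'
  -- a.e. summability of Z
  have hZsummable : ∀ᵐ ω ∂μ, Summable fun t => Z t ω := by
    have hmeas : ∀ t, AEMeasurable (fun ω => ENNReal.ofReal (Z t ω)) μ :=
      fun t => (ENNReal.measurable_ofReal.comp
        ((hZ_adapted t).mono (ℱ.le t) le_rfl)).aemeasurable
    have hlt : ∫⁻ ω, ∑' t, ENNReal.ofReal (Z t ω) ∂μ < ⊤ := by
      rw [lintegral_tsum hmeas]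
      have : ∀ t, ∫⁻ ω, ENNReal.ofReal (Z t ω) ∂μ = ENNReal.ofReal (∫ ω, Z t ω ∂μ) :=
        fun t => (ofReal_integral_eq_lintegral_ofReal (hZ_int t)
          (Filter.Eventually.of_forall (hZ_nonneg t))).symm
      simp_rw [this]
      rw [← ENNReal.ofReal_tsum_of_nonneg hZint_nonneg hsum]
      exact ENNReal.ofReal_lt_top
    filter_upwards [ae_lt_top' (AEMeasurable.ennreal_tsum hmeas) hlt.ne] with ω hω
    have hsum' : Summable fun t => (ENNReal.ofReal (Z t ω)).toReal :=
      ENNReal.summable_toReal hω.ne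
    convert hsum' using 2 with t
    rw [ENNReal.toReal_ofReal (hZ_nonneg t ω)]
  -- combine
  have hconv : ∀ᵐ ω ∂μ, ∃ l : ℝ, Tendsto (fun t => Y t ω) atTop (nhds l) := by
    filter_upwards [hMconv, hZsummable] with ω hM hZ
    refine ⟨-(ℱ.limitProcess (-M) μ ω) + ∑' s, Z s ω, ?_⟩
    have hMt : Tendsto (fun t => M t ω) atTop (nhds (-(ℱ.limitProcess (-M) μ ω))) := by
      have := hM.neg
      simpa using this
    have hSt : Tendsto (fun t => S t ω) atTop (nhds (∑' s, Z s ω)) :=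
      hZ.hasSum.tendsto_sum_nat
    have : ∀ t, Y t ω = M t ω + S t ω := fun t => by simp [hMdef]
    simp_rw [this]
    exact hMt.add hSt
  -- measurable nonneg representative via ENNReal limsup
  set Ylim : Ω → ℝ := fun ω =>
    (limsup (fun t => ENNReal.ofReal (Y t ω)) atTop).toReal with hYlimdef
  refine ⟨Ylim, ?_, fun ω => ENNReal.toReal_nonneg, ?_⟩
  · apply Measurable.ennreal_toReal
    apply Measurable.limsup
    intro t
    exact ENNReal.measurable_ofReal.comp
      ((hY_adapted t).mono (ℱ.le t) le_rfl)
  · filter_upwards [hconv] with ω ⟨l, hl⟩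
    have hl0 : 0 ≤ l := le_of_tendsto_of_tendsto' tendsto_const_nhds hl
      fun t => hY_nonneg t ω
    have h1 : Tendsto (fun t => ENNReal.ofReal (Y t ω)) atTop (nhds (ENNReal.ofReal l)) :=
      (ENNReal.continuous_ofReal.tendsto l).comp hl
    have h2 : limsup (fun t => ENNReal.ofReal (Y t ω)) atTop = ENNReal.ofReal l :=
      h1.limsup_eq
    have : Ylim ω = l := by
      rw [hYlimdef]
      simp only [h2, ENNReal.toReal_ofReal hl0]
    rw [this]
    exact hl
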